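/- Let $n = 2k$ be even and let $X_1, \dots, X_k$ be indeterminates. Consider the sequence $s = (X_1, \dots, X_k, X_k^{-1}, \dots, X_1^{-1})$ of $n$ elements of the field of rational functions $\mathbb{Q}(X_1,\dots,X_k)$. Then any permutation $s' = (s_{\sigma^{-1}(1)}, \dots, s_{\sigma^{-1}(n)})$ of $s$ whose first $k$ terms do not contain both some $X_i$ and its inverse $X_i^{-1}$ is regular, in the sense that for each $1 \le j \le n$, the partial product $s'_1 s'_2 \cdots s'_j$ is a simple root of the polynomial $\prod_{I \subset \{1,\dots,n\},\ |I| = j} (T - \prod_{i \in I} s'_i)$. In particular, there are at least $2^k k!$ regular permutations of $s$. -/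

import Mathlib

/-- A sequence `φ_1, …, φ_n` of elements of a field is regular if for each `1 ≤ j ≤ n`
the partial product `φ_1 ⋯ φ_j` is a simple root of `∏_{|I| = j} (T - ∏_{i ∈ I} φ_i)`,
i.e. arises from exactly one `j`-element subset `I ⊆ {1,…,n}`. -/
def IsRegularSeq {L : Type*} [Field L] {n : ℕ} (φ : Fin n → L) : Prop :=
  ∀ j : ℕ, 1 ≤ j → j ≤ n →
    Set.ncard {I : Finset (Fin n) | I.card = j ∧
      (∏ i ∈ I, φ i) = ∏ i ∈ Finset.univ.filter (fun i : Fin n => (i : ℕ) < j), φ i} = 1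

/-- The sequence `s = (X_1, …, X_k, X_k⁻¹, …, X_1⁻¹)` in `ℚ(X_1, …, X_k)`. -/
noncomputable def mirrorSeq (k : ℕ) :
    Fin (2 * k) → FractionRing (MvPolynomial (Fin k) ℚ) := fun j =>
  if h : (j : ℕ) < k then
    algebraMap (MvPolynomial (Fin k) ℚ) _ (MvPolynomial.X ⟨(j : ℕ), h⟩)
  else
    (algebraMap (MvPolynomial (Fin k) ℚ) _
      (MvPolynomial.X ⟨2 * k - 1 - (j : ℕ), by have := j.isLt; omega⟩))⁻¹


open MvPolynomial

namespace Stmt5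

noncomputable abbrev LL (k : ℕ) := FractionRing (MvPolynomial (Fin k) ℚ)

noncomputable def XL (k : ℕ) (a : Fin k) : LL k :=
  algebraMap (MvPolynomial (Fin k) ℚ) _ (MvPolynomial.X a)

lemma algebraMap_inj (k : ℕ) :
    Function.Injective (algebraMap (MvPolynomial (Fin k) ℚ) (LL k)) :=
  IsFractionRing.injective _ _

lemma XL_ne_zero {k : ℕ} (a : Fin k) : XL k a ≠ 0 := by
  simp only [XL, Ne, map_eq_zero_iff _ (algebraMap_inj k)]
  exact X_ne_zero a

lemma prodX_inj {k : ℕ} (p q : Fin k → ℕ)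
    (h : (∏ a, (X a : MvPolynomial (Fin k) ℚ) ^ p a) = ∏ a, X a ^ q a) : p = q := by
  have key : ∀ r : Fin k → ℕ, (∏ a, (X a : MvPolynomial (Fin k) ℚ) ^ r a)
      = monomial (Finsupp.equivFunOnFinite.symm r) 1 := by
    intro r
    rw [← prod_X_pow_eq_monomial]
    refine (Finset.prod_subset (Finset.subset_univ _) ?_).symm
    intro x _ hx
    have : (Finsupp.equivFunOnFinite.symm r) x = 0 := by
      simpa [Finsupp.mem_support_iff] using hx
    simp_all [Finsupp.equivFunOnFinite]
  rw [key p, key q, monomial_eq_monomial_iff] at h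
  rcases h with ⟨h1, _⟩ | ⟨h, _⟩
  · exact Finsupp.equivFunOnFinite.symm.injective h1 ▸ rfl
  · exact absurd h one_ne_zero

noncomputable def mono {k : ℕ} (e : Fin k → ℤ) : LL k := ∏ a, XL k a ^ e a

lemma mono_inj {k : ℕ} : Function.Injective (mono (k := k)) := by
  intro e d h
  have split : ∀ r : Fin k → ℤ, mono r =
      algebraMap (MvPolynomial (Fin k) ℚ) (LL k) (∏ a, X a ^ (r a).toNat) /
      algebraMap (MvPolynomial (Fin k) ℚ) (LL k) (∏ a, X a ^ (-r a).toNat) := by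
    intro r
    rw [map_prod, map_prod, ← Finset.prod_div_distrib]
    refine Finset.prod_congr rfl fun a _ => ?_
    rw [map_pow, map_pow]
    rw [show (XL k a : LL k) ^ r a = XL k a ^ ((r a).toNat : ℤ) / XL k a ^ (((-r a).toNat : ℕ) : ℤ) by
      rw [← zpow_sub₀ (XL_ne_zero a)]; congr 1; omega]
    rw [zpow_natCast, zpow_natCast]; rfl
  rw [split, split] at h
  have hne : ∀ r : Fin k → ℤ,
      algebraMap (MvPolynomial (Fin k) ℚ) (LL k) (∏ a, X a ^ (-r a).toNat) ≠ 0 := by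
    intro r
    simp only [Ne, map_eq_zero_iff _ (algebraMap_inj k)]
    exact Finset.prod_ne_zero_iff.2 fun a _ => pow_ne_zero _ (X_ne_zero a)
  rw [div_eq_div_iff (hne e) (hne d), ← map_mul, ← map_mul] at h
  have h2 := algebraMap_inj k h
  rw [← Finset.prod_mul_distrib, ← Finset.prod_mul_distrib] at h2
  simp only [← pow_add] at h2
  have := prodX_inj _ _ h2
  funext a
  have := congrFun this a
  omega


variable {k : ℕ}

lemma pl_bound (k : ℕ) (a : Fin k) : (a : ℕ) < 2 * k := by have := a.isLt; omega
lemma ph_bound (k : ℕ) (a : Fin k) : 2 * k - 1 - (a : ℕ) < 2 * k := by have := a.isLt; omega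
def pl (k : ℕ) (hk : 1 ≤ k) (a : Fin k) : Fin (2 * k) := ⟨a, pl_bound k a⟩
def ph (k : ℕ) (hk : 1 ≤ k) (a : Fin k) : Fin (2 * k) := ⟨2 * k - 1 - a, ph_bound k a⟩

variable (hk : 1 ≤ k)

lemma pl_lt (a : Fin k) : ((pl k hk a : Fin (2*k)) : ℕ) < k := a.isLt
lemma ph_ge (a : Fin k) : k ≤ ((ph k hk a : Fin (2*k)) : ℕ) := by
  have := a.isLt; simp only [ph]; omega

lemma pl_inj : Function.Injective (pl k hk) := by
  intro a b h; exact Fin.ext (by simpa [pl, Fin.ext_iff] using h)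
lemma ph_inj : Function.Injective (ph k hk) := by
  intro a b h
  have := a.isLt; have := b.isLt
  simp only [ph, Fin.ext_iff] at h ⊢; omega
lemma pl_ne_ph (a b : Fin k) : pl k hk a ≠ ph k hk b := by
  have h1 := pl_lt hk a; have h2 := ph_ge hk b
  intro h; rw [h] at h1; omega

lemma eq_pl_or_ph (i : Fin (2 * k)) :
    (∃ a, i = pl k hk a) ∨ ∃ a, i = ph k hk a := by
  by_cases h : (i : ℕ) < k
  · exact Or.inl ⟨⟨i, h⟩, Fin.ext rfl⟩
  · have := i.isLt
    exact Or.inr ⟨⟨2 * k - 1 - i, by omega⟩, Fin.ext (by simp [ph]; omega)⟩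

lemma mirrorSeq_pl (a : Fin k) : mirrorSeq k (pl k hk a) = XL k a := by
  have := a.isLt
  simp only [mirrorSeq, pl, dif_pos (show ((a:ℕ)) < k from a.isLt)]
  exact dif_pos this

lemma mirrorSeq_ph (a : Fin k) : mirrorSeq k (ph k hk a) = (XL k a)⁻¹ := by
  have ha := a.isLt
  have h : ¬ ((ph k hk a : Fin (2*k)) : ℕ) < k := by have := ph_ge hk a; omega
  simp only [mirrorSeq, dif_neg h]
  congr 2
  simp only [ph, XL]
  congr 1
  exact Fin.ext (by simp; omega)

def expo (J : Finset (Fin (2 * k))) : Fin k → ℤ := fun a =>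
  (if pl k hk a ∈ J then 1 else 0) - (if ph k hk a ∈ J then 1 else 0)

lemma prod_mirror (J : Finset (Fin (2 * k))) :
    (∏ i ∈ J, mirrorSeq k i) = mono (expo hk J) := by
  classical
  induction J using Finset.induction with
  | empty => simp [expo, mono]
  | @insert i J hi ih =>
    rw [Finset.prod_insert hi, ih, mono, mono]
    have key : ∀ a : Fin k, expo hk (insert i J) a = expo hk J a +
        (if i = pl k hk a then 1 else if i = ph k hk a then -1 else 0) := by
      intro a
      have hne := pl_ne_ph hk a a
      simp only [expo, Finset.mem_insert]
      by_cases h1 : i = pl k hk a <;> by_cases h2 : i = ph k hk a <;>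
        simp_all <;> split_ifs <;> simp_all <;> omega
    calc mirrorSeq k i * ∏ a, XL k a ^ expo hk J a
        = (∏ a, XL k a ^ (if i = pl k hk a then (1:ℤ) else if i = ph k hk a then -1 else 0)) *
          ∏ a, XL k a ^ expo hk J a := by
          congr 1
          rcases eq_pl_or_ph hk i with ⟨b, rfl⟩ | ⟨b, rfl⟩
          · rw [mirrorSeq_pl hk b, Finset.prod_eq_single b]
            · rw [if_pos rfl, zpow_one]
            · intro c _ hc
              rw [if_neg (fun h => hc (pl_inj hk h).symm),
                if_neg (fun h => pl_ne_ph hk b c h), zpow_zero]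
            · simp
          · rw [mirrorSeq_ph hk b, Finset.prod_eq_single b]
            · rw [if_neg (Ne.symm (pl_ne_ph hk b b)), if_pos rfl, zpow_neg_one]
            · intro c _ hc
              rw [if_neg (fun h => pl_ne_ph hk c b h.symm),
                if_neg (fun h => hc (ph_inj hk h).symm), zpow_zero]
            · simp
      _ = ∏ a, XL k a ^ expo hk (insert i J) a := by
          rw [← Finset.prod_mul_distrib]
          refine Finset.prod_congr rfl fun a _ => ?_
          rw [key a, zpow_add₀ (XL_ne_zero a), mul_comm]

lemma card_eq_sum (J : Finset (Fin (2 * k))) :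
    (J.card : ℤ) = ∑ a : Fin k,
      ((if pl k hk a ∈ J then (1:ℤ) else 0) + (if ph k hk a ∈ J then 1 else 0)) := by
  classical
  induction J using Finset.induction with
  | empty => simp
  | @insert i J hi ih =>
    rw [Finset.card_insert_of_notMem hi]
    have key : ∀ a : Fin k,
        ((if pl k hk a ∈ insert i J then (1:ℤ) else 0) + (if ph k hk a ∈ insert i J then 1 else 0))
        = ((if pl k hk a ∈ J then (1:ℤ) else 0) + (if ph k hk a ∈ J then 1 else 0)) +
          (if i = pl k hk a ∨ i = ph k hk a then 1 else 0) := by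
      intro a
      have hne := pl_ne_ph hk a a
      simp only [Finset.mem_insert]
      by_cases h1 : i = pl k hk a <;> by_cases h2 : i = ph k hk a <;>
        simp_all <;> split_ifs <;> simp_all
    rw [Finset.sum_congr rfl fun a _ => key a, Finset.sum_add_distrib, ← ih]
    have hone : ∑ a : Fin k, (if i = pl k hk a ∨ i = ph k hk a then (1:ℤ) else 0) = 1 := by
      rcases eq_pl_or_ph hk i with ⟨b, rfl⟩ | ⟨b, rfl⟩
      · rw [Finset.sum_eq_single b]
        · simp
        · intro c _ hc
          rw [if_neg]
          rintro (h | h)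
          · exact hc (pl_inj hk h).symm
          · exact pl_ne_ph hk b c h
        · simp
      · rw [Finset.sum_eq_single b]
        · simp
        · intro c _ hc
          rw [if_neg]
          rintro (h | h)
          · exact pl_ne_ph hk c b h.symm
          · exact hc (ph_inj hk h).symm
        · simp
    rw [hone]
    push_cast
    ring


lemma unique_subset {J J0 : Finset (Fin (2 * k))} (hc : J.card = J0.card)
    (he : expo hk J = expo hk J0)
    (h0 : (∀ a, ¬(pl k hk a ∈ J0 ∧ ph k hk a ∈ J0)) ∨ (∀ a, pl k hk a ∈ J0 ∨ ph k hk a ∈ J0)) :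
    J = J0 := by
  classical
  have hsum : ∑ a : Fin k,
      ((if pl k hk a ∈ J then (1:ℤ) else 0) + (if ph k hk a ∈ J then 1 else 0)) =
      ∑ a : Fin k,
      ((if pl k hk a ∈ J0 then (1:ℤ) else 0) + (if ph k hk a ∈ J0 then 1 else 0)) := by
    rw [← card_eq_sum hk J, ← card_eq_sum hk J0, hc]
  have hea : ∀ a : Fin k,
      (if pl k hk a ∈ J then (1:ℤ) else 0) - (if ph k hk a ∈ J then 1 else 0) =
      (if pl k hk a ∈ J0 then (1:ℤ) else 0) - (if ph k hk a ∈ J0 then 1 else 0) := by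
    intro a; exact congrFun he a
  have main : ∀ a : Fin k, ((pl k hk a ∈ J) ↔ (pl k hk a ∈ J0)) ∧
      ((ph k hk a ∈ J) ↔ (ph k hk a ∈ J0)) := by
    rcases h0 with h0 | h0
    · have hle : ∀ a ∈ (Finset.univ : Finset (Fin k)),
          ((if pl k hk a ∈ J0 then (1:ℤ) else 0) + (if ph k hk a ∈ J0 then 1 else 0)) ≤
          ((if pl k hk a ∈ J then (1:ℤ) else 0) + (if ph k hk a ∈ J then 1 else 0)) := by
        intro a _
        have h1 := hea a; have h2 := h0 a
        by_cases c1 : pl k hk a ∈ J <;> by_cases c2 : ph k hk a ∈ J <;>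
          by_cases c3 : pl k hk a ∈ J0 <;> by_cases c4 : ph k hk a ∈ J0 <;>
          simp_all
      have heq := (Finset.sum_eq_sum_iff_of_le hle).1 hsum.symm
      intro a
      have h1 := hea a; have h2 := h0 a; have h3 := heq a (Finset.mem_univ a)
      by_cases c1 : pl k hk a ∈ J <;> by_cases c2 : ph k hk a ∈ J <;>
        by_cases c3 : pl k hk a ∈ J0 <;> by_cases c4 : ph k hk a ∈ J0 <;>
        simp_all
    · have hle : ∀ a ∈ (Finset.univ : Finset (Fin k)),
          ((if pl k hk a ∈ J then (1:ℤ) else 0) + (if ph k hk a ∈ J then 1 else 0)) ≤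
          ((if pl k hk a ∈ J0 then (1:ℤ) else 0) + (if ph k hk a ∈ J0 then 1 else 0)) := by
        intro a _
        have h1 := hea a; have h2 := h0 a
        by_cases c1 : pl k hk a ∈ J <;> by_cases c2 : ph k hk a ∈ J <;>
          by_cases c3 : pl k hk a ∈ J0 <;> by_cases c4 : ph k hk a ∈ J0 <;>
          simp_all
      have heq := (Finset.sum_eq_sum_iff_of_le hle).1 hsum
      intro a
      have h1 := hea a; have h2 := h0 a; have h3 := heq a (Finset.mem_univ a)
      by_cases c1 : pl k hk a ∈ J <;> by_cases c2 : ph k hk a ∈ J <;>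
        by_cases c3 : pl k hk a ∈ J0 <;> by_cases c4 : ph k hk a ∈ J0 <;>
        simp_all
  ext i
  rcases eq_pl_or_ph hk i with ⟨a, rfl⟩ | ⟨a, rfl⟩
  · exact (main a).1
  · exact (main a).2


lemma card_filter_lt (n j : ℕ) (hj : j ≤ n) :
    (Finset.univ.filter (fun i : Fin n => (i : ℕ) < j)).card = j := by
  have : Finset.univ.filter (fun i : Fin n => (i : ℕ) < j)
      = Finset.map (Fin.castLEEmb hj) Finset.univ := by
    ext i
    simp only [Finset.mem_filter, Finset.mem_univ, true_and, Finset.mem_map,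
      Fin.castLEEmb_apply]
    constructor
    · intro h; exact ⟨⟨i, h⟩, rfl⟩
    · rintro ⟨a, rfl⟩; exact a.isLt
  rw [this, Finset.card_map, Finset.card_univ, Fintype.card_fin]

lemma main_part1 (σ : Equiv.Perm (Fin (2 * k)))
    (hσ : ∀ a : Fin k, ¬(((σ (pl k hk a) : Fin (2*k)) : ℕ) < k ∧ ((σ (ph k hk a) : Fin (2*k)) : ℕ) < k)) :
    IsRegularSeq (fun j => mirrorSeq k (σ⁻¹ j)) := by
  classical
  intro j hj1 hj2
  set I0 : Finset (Fin (2 * k)) := Finset.univ.filter (fun i : Fin (2 * k) => (i : ℕ) < j) with hI0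
  have hI0card : I0.card = j := card_filter_lt (2 * k) j hj2
  -- membership transfer
  have memJ : ∀ (I : Finset (Fin (2 * k))) (i : Fin (2 * k)),
      i ∈ I.image ⇑σ⁻¹ ↔ σ i ∈ I := by
    intro I i
    simp only [Finset.mem_image]
    constructor
    · rintro ⟨v, hv, rfl⟩; simpa using hv
    · intro h; exact ⟨σ i, h, by simp⟩
  have prodJ : ∀ I : Finset (Fin (2 * k)),
      (∏ i ∈ I, mirrorSeq k (σ⁻¹ i)) = mono (expo hk (I.image ⇑σ⁻¹)) := by
    intro I
    rw [← prod_mirror hk]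
    exact (Finset.prod_image (fun a _ b _ h => (σ⁻¹).injective h)).symm
  have himJ0 : ∀ i, i ∈ I0.image ⇑σ⁻¹ ↔ ((σ i : Fin (2*k)) : ℕ) < j := by
    intro i; rw [memJ]; simp [hI0]
  -- the h0 condition for J0
  have h0 : (∀ a, ¬(pl k hk a ∈ I0.image ⇑σ⁻¹ ∧ ph k hk a ∈ I0.image ⇑σ⁻¹)) ∨
      (∀ a, pl k hk a ∈ I0.image ⇑σ⁻¹ ∨ ph k hk a ∈ I0.image ⇑σ⁻¹) := by
    rcases le_or_gt j k with hjk | hjk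
    · left
      intro a ⟨h1, h2⟩
      rw [himJ0] at h1 h2
      exact hσ a ⟨by omega, by omega⟩
    · right
      intro a
      by_contra hcon
      push_neg at hcon
      obtain ⟨h1, h2⟩ := hcon
      rw [himJ0] at h1 h2
      push_neg at h1 h2
      -- both σ (pl a), σ (ph a) ≥ j > k : counting contradiction
      set T : Finset (Fin (2 * k)) :=
        Finset.univ.filter (fun i : Fin (2 * k) => k ≤ ((σ i : Fin (2*k)) : ℕ)) with hT
      have hTcard : T.card = k := by
        have : T = Finset.map σ.symm.toEmbedding
            (Finset.univ.filter (fun v : Fin (2 * k) => k ≤ (v : ℕ))) := by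
          ext i
          simp only [hT, Finset.mem_filter, Finset.mem_univ, true_and, Finset.mem_map,
            Equiv.coe_toEmbedding]
          constructor
          · intro h; exact ⟨σ i, h, by simp⟩
          · rintro ⟨v, hv, rfl⟩; simpa using hv
        rw [this, Finset.card_map]
        have hsplit := Finset.card_filter_add_card_filter_not
          (s := (Finset.univ : Finset (Fin (2*k)))) (p := fun v : Fin (2*k) => (v : ℕ) < k)
        have hco : Finset.filter (fun v : Fin (2*k) => ¬ (v : ℕ) < k) Finset.univ
            = Finset.filter (fun v : Fin (2*k) => k ≤ (v : ℕ)) Finset.univ := by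
          apply Finset.filter_congr; intro v _; simp [not_lt]
        rw [hco] at hsplit
        have hcu : (Finset.univ : Finset (Fin (2*k))).card = 2 * k := by simp
        have := card_filter_lt (2 * k) k (by omega)
        omega
      -- the injection f
      set f : Fin k → Fin (2 * k) := fun b =>
        if ((σ (pl k hk b) : Fin (2*k)) : ℕ) < k then ph k hk b else pl k hk b with hf
      have hfmem : ∀ b, f b = pl k hk b ∨ f b = ph k hk b := by
        intro b; by_cases h : ((σ (pl k hk b) : Fin (2*k)) : ℕ) < k <;> simp [hf, h]
      have hfT : ∀ b, f b ∈ T := by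
        intro b
        have := hσ b
        simp only [hT, Finset.mem_filter, Finset.mem_univ, true_and]
        by_cases h : ((σ (pl k hk b) : Fin (2*k)) : ℕ) < k
        · rw [hf]; simp only [if_pos h]; omega
        · rw [hf]; simp only [if_neg h]; omega
      have hfinj : Function.Injective f := by
        intro b c h
        rcases hfmem b with hb | hb <;> rcases hfmem c with hc | hc <;>
          rw [hb, hc] at h
        · exact pl_inj hk h
        · exact absurd h (pl_ne_ph hk b c)
        · exact absurd h.symm (pl_ne_ph hk c b)
        · exact ph_inj hk h
      set o : Fin (2 * k) := if ((σ (pl k hk a) : Fin (2*k)) : ℕ) < k then pl k hk a else ph k hk a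
        with ho
      have hoT : o ∈ T := by
        simp only [hT, Finset.mem_filter, Finset.mem_univ, true_and]
        by_cases h : ((σ (pl k hk a) : Fin (2*k)) : ℕ) < k
        · rw [ho]; simp only [if_pos h]; omega
        · rw [ho]; simp only [if_neg h]; omega
      have honotin : o ∉ Finset.univ.image f := by
        simp only [Finset.mem_image, Finset.mem_univ, true_and, not_exists]
        intro b hb
        by_cases hba : b = a
        · subst hba
          by_cases h : ((σ (pl k hk b) : Fin (2*k)) : ℕ) < k
          · rw [hf, ho] at hb; simp only [if_pos h] at hb
            exact pl_ne_ph hk b b hb.symm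
          · rw [hf, ho] at hb; simp only [if_neg h] at hb
            exact pl_ne_ph hk b b hb
        · rcases hfmem b with h | h <;> rw [h] at hb <;> rw [ho] at hb <;>
            split_ifs at hb
          · exact hba (pl_inj hk hb)
          · exact pl_ne_ph hk b a hb
          · exact pl_ne_ph hk a b hb.symm
          · exact hba (ph_inj hk hb)
      have hsub : insert o (Finset.univ.image f) ⊆ T := by
        intro x hx
        rcases Finset.mem_insert.1 hx with rfl | hx
        · exact hoT
        · obtain ⟨b, _, rfl⟩ := Finset.mem_image.1 hx
          exact hfT b
      have hcard2 : (insert o (Finset.univ.image f)).card = k + 1 := by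
        rw [Finset.card_insert_of_notMem honotin,
          Finset.card_image_of_injective _ hfinj, Finset.card_univ, Fintype.card_fin]
      have := Finset.card_le_card hsub
      omega
  -- conclude
  have hset : {I : Finset (Fin (2 * k)) | I.card = j ∧
      (∏ i ∈ I, mirrorSeq k (σ⁻¹ i)) = ∏ i ∈ I0, mirrorSeq k (σ⁻¹ i)} = {I0} := by
    ext I
    simp only [Set.mem_setOf_eq, Set.mem_singleton_iff]
    constructor
    · rintro ⟨hcard, hprod⟩
      rw [prodJ, prodJ] at hprod
      have hexp := mono_inj hprod
      have hcards : (I.image ⇑σ⁻¹).card = (I0.image ⇑σ⁻¹).card := by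
        rw [Finset.card_image_of_injective _ (σ⁻¹).injective,
          Finset.card_image_of_injective _ (σ⁻¹).injective, hcard, hI0card]
      have := unique_subset hk hcards hexp h0
      exact Finset.image_injective (σ⁻¹).injective this
    · rintro rfl; exact ⟨hI0card, rfl⟩
  show Set.ncard {I : Finset (Fin (2 * k)) | I.card = j ∧ _} = 1
  rw [hset]
  exact Set.ncard_singleton _


def pairEquiv (hk : 1 ≤ k) : Fin k × Bool ≃ Fin (2 * k) where
  toFun := fun p => if p.2 then ph k hk p.1 else pl k hk p.1
  invFun := fun i => if h : (i : ℕ) < k then (⟨i, h⟩, false)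
    else (⟨2 * k - 1 - i, by have := i.isLt; omega⟩, true)
  left_inv := by
    rintro ⟨a, b⟩
    dsimp only
    cases b
    · rw [if_neg (by simp), dif_pos (pl_lt hk a)]
      simp [pl]
    · rw [if_pos rfl, dif_neg (by have := ph_ge hk a; omega)]
      have := a.isLt
      simp only [ph, Prod.mk.injEq]
      exact ⟨Fin.ext (by simp; omega), trivial⟩
  right_inv := by
    intro i
    have hi := i.isLt
    dsimp only
    by_cases h : (i : ℕ) < k
    · rw [dif_pos h]
      simp [pl]
    · rw [dif_neg h]
      simp only [if_pos rfl, ph]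
      exact Fin.ext (by simp; omega)

def boolFlip : Equiv.Perm Bool := Function.Involutive.toPerm not Bool.not_not

noncomputable def Φ (hk : 1 ≤ k) (p : (Fin k → Bool) × Equiv.Perm (Fin k)) :
    Equiv.Perm (Fin (2 * k)) :=
  (pairEquiv hk).symm.trans ((Equiv.prodShear p.2
    (fun a => if p.1 a then boolFlip else Equiv.refl Bool)).trans (pairEquiv hk))

lemma Φ_pl (p : (Fin k → Bool) × Equiv.Perm (Fin k)) (a : Fin k) :
    Φ hk p (pl k hk a) = if p.1 a then ph k hk (p.2 a) else pl k hk (p.2 a) := by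
  have h1 : (pairEquiv hk).symm (pl k hk a) = (a, false) := by
    rw [Equiv.symm_apply_eq]
    simp [pairEquiv]
  simp only [Φ, Equiv.trans_apply, h1, Equiv.prodShear]
  by_cases h : p.1 a <;> simp [h, pairEquiv, boolFlip, Function.Involutive.toPerm]

lemma Φ_ph (p : (Fin k → Bool) × Equiv.Perm (Fin k)) (a : Fin k) :
    Φ hk p (ph k hk a) = if p.1 a then pl k hk (p.2 a) else ph k hk (p.2 a) := by
  have h1 : (pairEquiv hk).symm (ph k hk a) = (a, true) := by
    rw [Equiv.symm_apply_eq]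
    simp [pairEquiv]
  simp only [Φ, Equiv.trans_apply, h1, Equiv.prodShear]
  by_cases h : p.1 a <;> simp [h, pairEquiv, boolFlip, Function.Involutive.toPerm]

lemma Φ_cond (p : (Fin k → Bool) × Equiv.Perm (Fin k)) (a : Fin k) :
    ¬(((Φ hk p (pl k hk a) : Fin (2*k)) : ℕ) < k ∧
      ((Φ hk p (ph k hk a) : Fin (2*k)) : ℕ) < k) := by
  rw [Φ_pl, Φ_ph]
  by_cases h : p.1 a = true
  · rw [if_pos h, if_pos h]
    intro ⟨_, h2⟩
    have := ph_ge hk (p.2 a); omega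
  · rw [if_neg h, if_neg h]
    intro ⟨h1, _⟩
    have := ph_ge hk (p.2 a); omega

lemma Φ_inj : Function.Injective (Φ (k := k) hk) := by
  intro p q h
  have key : ∀ a : Fin k, p.1 a = q.1 a ∧ p.2 a = q.2 a := by
    intro a
    have h1 : Φ hk p (pl k hk a) = Φ hk q (pl k hk a) := by rw [h]
    rw [Φ_pl, Φ_pl] at h1
    by_cases hp : p.1 a = true <;> by_cases hq : q.1 a = true
    · rw [if_pos hp, if_pos hq] at h1
      exact ⟨hp.trans hq.symm, ph_inj hk h1⟩
    · rw [if_pos hp, if_neg hq] at h1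
      exact absurd h1.symm (pl_ne_ph hk _ _)
    · rw [if_neg hp, if_pos hq] at h1
      exact absurd h1 (pl_ne_ph hk _ _)
    · rw [if_neg hp, if_neg hq] at h1
      refine ⟨?_, pl_inj hk h1⟩
      revert hp hq; cases p.1 a <;> cases q.1 a <;> simp
  obtain ⟨p1, p2⟩ := p
  obtain ⟨q1, q2⟩ := q
  simp only [Prod.mk.injEq]
  exact ⟨funext fun a => (key a).1, Equiv.ext fun a => (key a).2⟩

lemma main_part2 (hk : 1 ≤ k) :
    2 ^ k * Nat.factorial k ≤
      Set.ncard {σ : Equiv.Perm (Fin (2 * k)) |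
        IsRegularSeq (fun j => mirrorSeq k (σ⁻¹ j))} := by
  classical
  have hsub : (Φ hk) '' Set.univ ⊆
      {σ : Equiv.Perm (Fin (2 * k)) | IsRegularSeq (fun j => mirrorSeq k (σ⁻¹ j))} := by
    rintro σ ⟨p, _, rfl⟩
    exact main_part1 hk (Φ hk p) (Φ_cond hk p)
  have h1 : ((Φ hk) '' Set.univ).ncard = 2 ^ k * Nat.factorial k := by
    rw [Set.ncard_image_of_injective _ (Φ_inj hk), Set.ncard_univ,
      Nat.card_eq_fintype_card, Fintype.card_prod, Fintype.card_perm, Fintype.card_fun]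
    simp
  rw [← h1]
  exact Set.ncard_le_ncard hsub (Set.toFinite _)


end Stmt5

/-- Any permutation of `s = (X_1, …, X_k, X_k⁻¹, …, X_1⁻¹)` whose first
`k` terms do not contain both some `X_i` and its inverse is regular; in particular there
are at least `2^k k!` regular permutations of `s`. -/
theorem stmt_5 (k : ℕ) (hk : 1 ≤ k) :
    (∀ σ : Equiv.Perm (Fin (2 * k)),
      (∀ i : Fin k,
        ¬(((σ ⟨(i : ℕ), by have := i.isLt; omega⟩ : Fin (2 * k)) : ℕ) < k ∧
          ((σ ⟨2 * k - 1 - (i : ℕ), by have := i.isLt; omega⟩ : Fin (2 * k)) : ℕ) < k)) →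
      IsRegularSeq (fun j => mirrorSeq k (σ⁻¹ j))) ∧
    2 ^ k * Nat.factorial k ≤
      Set.ncard {σ : Equiv.Perm (Fin (2 * k)) |
        IsRegularSeq (fun j => mirrorSeq k (σ⁻¹ j))} := by
  constructor
  · intro σ hσ
    exact Stmt5.main_part1 hk σ (fun a => hσ a)
  · exact Stmt5.main_part2 hk
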